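/- Let N ≥ 3 be an integer and f : ℝ → ℝ satisfy (f1)–(f4), and set μ := −(1/2)·limsup_{t→0} f(t)/t. Then μ is a finite positive real number, and there exists λ₀ ∈ (0,1) such that λ₀F₁(ζ) − F₂(ζ) > 0, where ζ > 0 is as in (f4); moreover, for every λ ∈ [λ₀, 1] the function f^λ := λf₁ − f₂ is continuous and odd and satisfies (f2), (f3), and (f4) (the last with the same ζ, i.e., F^λ(ζ) := λF₁(ζ) − F₂(ζ) > 0). -/

import Mathlib

open Filter Topology Set MeasureTheory intervalIntegral

/-- `μ := -(1/2) · limsup_{t→0} f(t)/t`. -/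
noncomputable def muBL (f : ℝ → ℝ) : ℝ :=
  -(1 / 2) * Filter.limsup (fun t => f t / t) (𝓝[≠] (0 : ℝ))

/-- `f₁(t) = max{f(t)+2μt, 0}` for `t ≥ 0` and `f₁(t) = min{f(t)+2μt, 0}` for `t < 0`. -/
noncomputable def fOne (f : ℝ → ℝ) (t : ℝ) : ℝ :=
  if 0 ≤ t then max (f t + 2 * muBL f * t) 0 else min (f t + 2 * muBL f * t) 0

/-- `f₂ := f₁ - f`. -/
noncomputable def fTwo (f : ℝ → ℝ) (t : ℝ) : ℝ := fOne f t - f t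

/-- `F₁(t) := ∫₀ᵗ f₁(s) ds`. -/
noncomputable def FOne (f : ℝ → ℝ) (t : ℝ) : ℝ := ∫ s in (0:ℝ)..t, fOne f s

/-- `F₂(t) := ∫₀ᵗ f₂(s) ds`. -/
noncomputable def FTwo (f : ℝ → ℝ) (t : ℝ) : ℝ := ∫ s in (0:ℝ)..t, fTwo f s

/-- Condition (f2): `-∞ < liminf_{t→0} f(t)/t ≤ limsup_{t→0} f(t)/t < 0`,
expressed via eventual bounds near `0`. -/
def CondF2 (f : ℝ → ℝ) : Prop :=
  ∃ m M : ℝ, M < 0 ∧ (∀ᶠ t in 𝓝[≠] (0 : ℝ), m ≤ f t / t) ∧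
    (∀ᶠ t in 𝓝[≠] (0 : ℝ), f t / t ≤ M)

/-- Condition (f3): `lim_{|t|→∞} f(t)/|t|^{(N+2)/(N-2)} = 0`. -/
def CondF3 (N : ℕ) (f : ℝ → ℝ) : Prop :=
  Tendsto (fun t : ℝ => f t / |t| ^ ((N + 2 : ℝ) / (N - 2)))
    (comap (fun t : ℝ => |t|) atTop) (𝓝 0)

lemma muBL_pos_and_ub (f : ℝ → ℝ) (hf2 : CondF2 f) :
    0 < muBL f ∧ ∀ᶠ t in 𝓝[≠] (0:ℝ), f t / t ≤ -muBL f := by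
  obtain ⟨m, M, hM, hlb, hub⟩ := hf2
  have hbdd : IsBoundedUnder (· ≤ ·) (𝓝[≠] (0:ℝ)) (fun t => f t / t) :=
    ⟨M, by simpa [eventually_map] using hub⟩
  have hcob : IsCoboundedUnder (· ≤ ·) (𝓝[≠] (0:ℝ)) (fun t => f t / t) :=
    IsBoundedUnder.isCoboundedUnder_le ⟨m, by simpa [eventually_map] using hlb⟩
  have hL : limsup (fun t => f t / t) (𝓝[≠] (0:ℝ)) ≤ M :=
    limsup_le_of_le hcob hub
  have hμ : 0 < muBL f := by
    rw [muBL]; nlinarith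
  refine ⟨hμ, ?_⟩
  have hlt : limsup (fun t => f t / t) (𝓝[≠] (0:ℝ)) < -muBL f := by
    rw [muBL] at hμ ⊢
    set L := limsup (fun t => f t / t) (𝓝[≠] (0:ℝ))
    linarith
  exact (eventually_lt_of_limsup_lt hlt hbdd).mono fun t h => h.le

lemma myMaxNegZero (a : ℝ) : max (-a) 0 = -(min a 0) := by
  rcases le_total a 0 with h | h
  · rw [min_eq_left h, max_eq_left (by linarith)]
  · rw [min_eq_right h, max_eq_right (by linarith), neg_zero]

lemma myMinNegZero (a : ℝ) : min (-a) 0 = -(max a 0) := by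
  rcases le_total a 0 with h | h
  · rw [max_eq_right h, min_eq_right (by linarith), neg_zero]
  · rw [max_eq_left h, min_eq_left (by linarith)]

lemma fOne_div (f : ℝ → ℝ) {t : ℝ} (ht : t ≠ 0) :
    fOne f t / t = max ((f t + 2 * muBL f * t) / t) 0 := by
  set g := f t + 2 * muBL f * t with hg
  rcases ht.lt_or_gt with h | h
  · rw [fOne, if_neg (not_le.2 h), ← hg]
    rcases le_total g 0 with hg0 | hg0
    · rw [min_eq_left hg0, max_eq_left (div_nonneg_iff.mpr (Or.inr ⟨hg0, h.le⟩))]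
    · rw [min_eq_right hg0, zero_div,
        max_eq_right (div_nonpos_of_nonneg_of_nonpos hg0 h.le)]
  · rw [fOne, if_pos h.le, ← hg]
    rcases le_total g 0 with hg0 | hg0
    · rw [max_eq_right hg0, zero_div,
        max_eq_right (div_nonpos_iff.mpr (Or.inr ⟨hg0, h.le⟩))]
    · rw [max_eq_left hg0, max_eq_left (div_nonneg hg0 h.le)]

lemma f_zero (f : ℝ → ℝ) (hodd : ∀ t, f (-t) = - f t) : f 0 = 0 := by
  have := hodd 0; simp at this; linarith

lemma fOne_odd (f : ℝ → ℝ) (hodd : ∀ t, f (-t) = - f t) (t : ℝ) :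
    fOne f (-t) = - fOne f t := by
  have hg : f (-t) + 2 * muBL f * (-t) = -(f t + 2 * muBL f * t) := by
    rw [hodd]; ring
  rcases lt_trichotomy t 0 with h | h | h
  · rw [fOne, fOne, if_pos (by linarith : (0:ℝ) ≤ -t), if_neg (not_le.2 h), hg,
      myMaxNegZero]
  · subst h
    simp [fOne, f_zero f hodd]
  · rw [fOne, fOne, if_neg (by simp only [not_le]; linarith : ¬ (0:ℝ) ≤ -t), if_pos h.le, hg,
      myMinNegZero]

lemma abs_fOne_le (f : ℝ → ℝ) (t : ℝ) : |fOne f t| ≤ |f t + 2 * muBL f * t| := by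
  rw [fOne]
  split_ifs
  · rw [abs_of_nonneg (le_max_right _ _)]
    exact max_le (le_abs_self _) (abs_nonneg _)
  · rw [abs_of_nonpos (min_le_right _ _), ← myMaxNegZero]
    exact max_le (neg_le_abs _) (abs_nonneg _)

lemma fOne_cont (f : ℝ → ℝ) (hf : Continuous f) (hodd : ∀ t, f (-t) = - f t) :
    Continuous (fOne f) := by
  have hg : Continuous (fun t => f t + 2 * muBL f * t) := by continuity
  rw [continuous_iff_continuousAt]
  intro x
  rcases lt_trichotomy x 0 with h | h | h
  · have hc : Continuous (fun t => min (f t + 2 * muBL f * t) (0:ℝ)) :=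
      hg.min continuous_const
    refine hc.continuousAt.congr ?_
    filter_upwards [Iio_mem_nhds h] with t (ht : t < 0)
    simp only [fOne, not_le.2 ht, if_false]
  · subst h
    have h0 : fOne f 0 = 0 := by simp [fOne, f_zero f hodd]
    rw [ContinuousAt, h0]
    apply squeeze_zero_norm (fun t => (abs_fOne_le f t))
    have h1 : Tendsto (fun t => |f t + 2 * muBL f * t|) (𝓝 0) (𝓝 |f 0 + 2 * muBL f * 0|) :=
      (hg.abs.tendsto 0)
    simpa [f_zero f hodd] using h1
  · have hc : Continuous (fun t => max (f t + 2 * muBL f * t) (0:ℝ)) :=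
      hg.max continuous_const
    refine hc.continuousAt.congr ?_
    filter_upwards [Ioi_mem_nhds h] with t (ht : 0 < t)
    simp only [fOne, ht.le, if_true]

theorem statement13 (N : ℕ) (hN : 3 ≤ N) (f : ℝ → ℝ) (hf : Continuous f)
    (hodd : ∀ t, f (-t) = - f t) (hf2 : CondF2 f) (hf3 : CondF3 N f)
    (ζ : ℝ) (hζ : 0 < ζ) (hF : 0 < ∫ s in (0:ℝ)..ζ, f s) :
    0 < muBL f ∧
    ∃ lam0 ∈ Set.Ioo (0:ℝ) 1, 0 < lam0 * FOne f ζ - FTwo f ζ ∧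
      ∀ lam ∈ Set.Icc lam0 1,
        Continuous (fun t => lam * fOne f t - fTwo f t) ∧
        (∀ t, lam * fOne f (-t) - fTwo f (-t) = -(lam * fOne f t - fTwo f t)) ∧
        CondF2 (fun t => lam * fOne f t - fTwo f t) ∧
        CondF3 N (fun t => lam * fOne f t - fTwo f t) ∧
        0 < lam * FOne f ζ - FTwo f ζ := by
  obtain ⟨hμ, hub⟩ := muBL_pos_and_ub f hf2
  obtain ⟨m, M, hM, hlb, -⟩ := hf2
  have h1cont : Continuous (fOne f) := fOne_cont f hf hodd
  have h2cont : Continuous (fTwo f) := h1cont.sub hf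
  -- Integral facts
  have hInt1 : IntervalIntegrable (fOne f) volume 0 ζ := h1cont.intervalIntegrable 0 ζ
  have hInt2 : IntervalIntegrable (fTwo f) volume 0 ζ := h2cont.intervalIntegrable 0 ζ
  have hdiffF : FOne f ζ - FTwo f ζ = ∫ s in (0:ℝ)..ζ, f s := by
    rw [FOne, FTwo, ← intervalIntegral.integral_sub hInt1 hInt2]
    congr 1
    funext s
    simp [fTwo]
  have hF2nonneg : 0 ≤ FTwo f ζ := by
    apply intervalIntegral.integral_nonneg hζ.le
    intro u hu
    have hu0 : 0 ≤ u := hu.1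
    rw [fTwo, fOne, if_pos hu0]
    nlinarith [le_max_left (f u + 2 * muBL f * u) 0, mul_nonneg hμ.le hu0]
  have hF1pos : 0 < FOne f ζ := by linarith
  set q : ℝ := FTwo f ζ / FOne f ζ with hq
  have hqlt : q < 1 := by
    rw [hq, div_lt_one hF1pos]; linarith
  have hqnn : 0 ≤ q := div_nonneg hF2nonneg hF1pos.le
  refine ⟨hμ, (q + 1) / 2, ⟨by linarith, by linarith⟩, ?_, ?_⟩
  · have : q < (q + 1) / 2 := by linarith
    rw [hq, div_lt_iff₀ hF1pos] at this
    linarith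
  intro lam ⟨hlam0, hlam1⟩
  have hlampos : 0 < lam := lt_of_lt_of_le (by linarith) hlam0
  refine ⟨(continuous_const.mul h1cont).sub h2cont, ?_, ?_, ?_, ?_⟩
  · intro t
    rw [fTwo, fTwo, fOne_odd f hodd, hodd]
    ring
  · -- CondF2
    refine ⟨m - muBL f, -muBL f, by linarith, ?_, ?_⟩ <;>
    · filter_upwards [hub, hlb, self_mem_nhdsWithin] with t h1 h2 (ht : t ≠ 0)
      have hsplit : (f t + 2 * muBL f * t) / t = f t / t + 2 * muBL f := by
        field_simp
      have key : (lam * fOne f t - fTwo f t) / t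
          = (lam - 1) * max (f t / t + 2 * muBL f) 0 + (f t / t + 2 * muBL f)
            - 2 * muBL f := by
        rw [sub_div, mul_div_assoc, fOne_div f ht, fTwo, sub_div, fOne_div f ht, hsplit]
        ring
      rw [key]
      set a := f t / t + 2 * muBL f with ha
      have hM0 : 0 ≤ max a 0 := le_max_right _ _
      have haμ : a ≤ muBL f := by rw [ha]; linarith
      have ha2 : m + 2 * muBL f ≤ a := by rw [ha]; linarith
      have hMμ : max a 0 ≤ muBL f := max_le haμ hμ.le
      have hprod1 : (-1) * (max a 0) ≤ (lam - 1) * (max a 0) :=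
        mul_le_mul_of_nonneg_right (by linarith) hM0
      have hprod2 : (lam - 1) * (max a 0) ≤ 0 :=
        mul_nonpos_of_nonpos_of_nonneg (by linarith) hM0
      linarith
  · -- CondF3
    set p : ℝ := (N + 2 : ℝ) / (N - 2) with hp
    have hN2 : (1:ℝ) ≤ (N:ℝ) - 2 := by
      have : (3:ℝ) ≤ (N:ℝ) := by exact_mod_cast hN
      linarith
    have hpgt : 1 < p := by
      rw [hp, lt_div_iff₀ (by linarith)]
      linarith
    have habs : Tendsto (fun t : ℝ => |t|) (comap (fun t : ℝ => |t|) atTop) atTop :=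
      tendsto_comap
    have hpow : Tendsto (fun t : ℝ => |t| ^ (1 - p)) (comap (fun t : ℝ => |t|) atTop) (𝓝 0) := by
      have h := (tendsto_rpow_neg_atTop (by linarith : (0:ℝ) < p - 1)).comp habs
      simpa [neg_sub, Function.comp_def] using h
    have hfabs : Tendsto (fun t : ℝ => |f t / |t| ^ p|) (comap (fun t : ℝ => |t|) atTop) (𝓝 0) := by
      have := (continuous_abs.tendsto 0).comp hf3
      simpa [Function.comp_def, hp] using this
    have hOne : Tendsto (fun t : ℝ => (lam - 1) * fOne f t / |t| ^ p)
        (comap (fun t : ℝ => |t|) atTop) (𝓝 0) := by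
      apply squeeze_zero_norm' ?_ (by simpa using (hfabs.add (hpow.const_mul (2 * muBL f))))
      filter_upwards [habs.eventually (eventually_ge_atTop 1)] with t ht
      have htpos : (0:ℝ) < |t| := by linarith
      have hppos : (0:ℝ) < |t| ^ p := Real.rpow_pos_of_pos htpos p
      have h1 : |(lam - 1) * fOne f t / |t| ^ p| = |lam - 1| * |fOne f t| / |t| ^ p := by
        rw [abs_div, abs_mul, abs_of_pos hppos]
      rw [Real.norm_eq_abs, h1]
      have h2 : |lam - 1| ≤ 1 := by
        rw [abs_le]; constructor <;> linarith
      have h3 : |fOne f t| ≤ |f t| + 2 * muBL f * |t| := by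
        calc |fOne f t| ≤ |f t + 2 * muBL f * t| := abs_fOne_le f t
          _ ≤ |f t| + |2 * muBL f * t| := abs_add_le _ _
          _ = |f t| + 2 * muBL f * |t| := by
              rw [abs_mul, abs_of_pos (by linarith : (0:ℝ) < 2 * muBL f)]
      have h4 : |lam - 1| * |fOne f t| ≤ |f t| + 2 * muBL f * |t| := by
        calc |lam - 1| * |fOne f t| ≤ 1 * |fOne f t| :=
              mul_le_mul_of_nonneg_right h2 (abs_nonneg _)
          _ = |fOne f t| := one_mul _
          _ ≤ _ := h3
      have h5 : |lam - 1| * |fOne f t| / |t| ^ p ≤ (|f t| + 2 * muBL f * |t|) / |t| ^ p :=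
        (div_le_div_iff_of_pos_right hppos).mpr h4
      refine h5.trans (le_of_eq ?_)
      rw [add_div, abs_div, abs_of_pos hppos, Real.rpow_sub htpos, Real.rpow_one]
      ring
    have hcomb : Tendsto (fun t : ℝ => (lam - 1) * fOne f t / |t| ^ p + f t / |t| ^ p)
        (comap (fun t : ℝ => |t|) atTop) (𝓝 0) := by
      simpa using hOne.add hf3
    refine hcomb.congr fun t => ?_
    simp only [fTwo]
    ring
  · -- positivity of the functional
    have h1 : q < (q + 1) / 2 := by linarith
    rw [hq, div_lt_iff₀ hF1pos] at h1
    nlinarith
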